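/- Let f : ℝⁿ → ℝ ∪ {+∞} be a proper convex function that is symmetric (f(x) = f(Px) for every n×n permutation matrix P), let K_f be the associated spectral vector cone and K_F the associated spectral matrix cone. Let (t̄, v̄, X̄) ∈ ℝ × ℝ × Sⁿ and let X̄ = U diag(λ̄) Uᵀ be an eigenvalue decomposition of X̄ with U orthogonal and λ̄ ∈ ℝⁿ. Write Π_{K_f}(t̄, v̄, λ̄) = (t*, v*, λ*). Then the Euclidean projection of (t̄, v̄, X̄) onto K_F is Π_{K_F}(t̄, v̄, X̄) = (t*, v*, U diag(λ*) Uᵀ). -/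

import Mathlib

open Matrix Finset

/-- The entries of `x` sorted in nonincreasing order. -/
noncomputable def sortDesc {n : ℕ} (x : Fin n → ℝ) : Fin n → ℝ :=
  fun i => (x ∘ Tuple.sort x) i.rev

open Classical in
/-- The eigenvalues of a real symmetric matrix in nonincreasing order
(junk value `0` if the matrix is not symmetric). -/
noncomputable def eigsDesc {n : ℕ} (X : Matrix (Fin n) (Fin n) ℝ) : Fin n → ℝ :=
  if h : X.IsHermitian then sortDesc h.eigenvalues else 0

/-- The spectral vector cone `K_f` associated with the proper convex function with
value `f` on its domain `S` (and `+∞` outside `S`):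
`K_f = cl {(t, v, x) | v > 0, v * f(x / v) ≤ t}`. -/
def vecCone {n : ℕ} (S : Set (Fin n → ℝ)) (f : (Fin n → ℝ) → ℝ) :
    Set (ℝ × ℝ × (Fin n → ℝ)) :=
  closure {p | 0 < p.2.1 ∧ p.2.1⁻¹ • p.2.2 ∈ S ∧ p.2.1 * f (p.2.1⁻¹ • p.2.2) ≤ p.1}

/-- The spectral matrix cone `K_F`, where `F X = f (λ(X))` with `λ(X)` the eigenvalues
of the symmetric matrix `X` in nonincreasing order:
`K_F = cl {(t, v, X) | X symmetric, v > 0, v * F(X / v) ≤ t}`. -/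
noncomputable def matCone {n : ℕ} (S : Set (Fin n → ℝ)) (f : (Fin n → ℝ) → ℝ) :
    Set (ℝ × ℝ × Matrix (Fin n) (Fin n) ℝ) :=
  closure {p | p.2.2.IsHermitian ∧ 0 < p.2.1 ∧ p.2.1⁻¹ • eigsDesc p.2.2 ∈ S ∧
    p.2.1 * f (p.2.1⁻¹ • eigsDesc p.2.2) ≤ p.1}

lemma sortDesc_comp_perm {n : ℕ} (x : Fin n → ℝ) (σ : Equiv.Perm (Fin n)) :
    sortDesc (x ∘ σ) = sortDesc x := by
  unfold sortDesc
  rw [Tuple.comp_perm_comp_sort_eq_comp_sort]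

lemma sortDesc_eq_comp {n : ℕ} (x : Fin n → ℝ) :
    sortDesc x = x ∘ (Fin.revPerm.trans (Tuple.sort x)) := rfl

lemma antitone_sortDesc {n : ℕ} (x : Fin n → ℝ) : Antitone (sortDesc x) := by
  intro i j hij
  exact Tuple.monotone_sort x (by simpa [Fin.rev_le_rev] using hij)

lemma sortDesc_eq_of_perm {n : ℕ} {a b : Fin n → ℝ}
    (h : (List.ofFn a).Perm (List.ofFn b)) : sortDesc a = sortDesc b := by
  have key : a ∘ Tuple.sort a = b ∘ Tuple.sort b := by
    apply List.ofFn_injective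
    apply List.Perm.eq_of_sortedLE ((Tuple.monotone_sort a).sortedLE_ofFn)
      ((Tuple.monotone_sort b).sortedLE_ofFn)
    have h1 : (List.ofFn (a ∘ Tuple.sort a)).Perm (List.ofFn a) := by
      rw [← Multiset.coe_eq_coe, ← Fin.univ_val_map, ← Fin.univ_val_map]
      have : (univ.val.map (Tuple.sort a : Fin n → Fin n)) = univ.val := by
        have := Finset.map_univ_equiv (Tuple.sort a)
        calc univ.val.map (Tuple.sort a : Fin n → Fin n)
            = (univ.map (Tuple.sort a).toEmbedding).val := rfl
          _ = univ.val := by rw [this]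
      calc univ.val.map (a ∘ Tuple.sort a)
          = (univ.val.map (Tuple.sort a : Fin n → Fin n)).map a := by
            rw [Multiset.map_map]
        _ = univ.val.map a := by rw [this]
    have h2 : (List.ofFn (b ∘ Tuple.sort b)).Perm (List.ofFn b) := by
      rw [← Multiset.coe_eq_coe, ← Fin.univ_val_map, ← Fin.univ_val_map]
      have : (univ.val.map (Tuple.sort b : Fin n → Fin n)) = univ.val := by
        have := Finset.map_univ_equiv (Tuple.sort b)
        calc univ.val.map (Tuple.sort b : Fin n → Fin n)
            = (univ.map (Tuple.sort b).toEmbedding).val := rfl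
          _ = univ.val := by rw [this]
      calc univ.val.map (b ∘ Tuple.sort b)
          = (univ.val.map (Tuple.sort b : Fin n → Fin n)).map b := by
            rw [Multiset.map_map]
        _ = univ.val.map b := by rw [this]
    exact (h1.trans h).trans h2.symm
  funext i
  show (a ∘ Tuple.sort a) i.rev = (b ∘ Tuple.sort b) i.rev
  rw [key]

open Polynomial
variable {n : ℕ}


lemma charpoly_conj {P A Q : Matrix (Fin n) (Fin n) ℝ} (hPQ : P * Q = 1) (hQP : Q * P = 1) :
    (P * A * Q).charpoly = A.charpoly := by
  unfold Matrix.charpoly charmatrix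
  have h1 : (C : ℝ →+* ℝ[X]).mapMatrix (P * A * Q)
      = (C : ℝ →+* ℝ[X]).mapMatrix P * (C : ℝ →+* ℝ[X]).mapMatrix A
        * (C : ℝ →+* ℝ[X]).mapMatrix Q := by
    simp [_root_.map_mul]
  have hP : ((C : ℝ →+* ℝ[X]).mapMatrix P) * ((C : ℝ →+* ℝ[X]).mapMatrix Q) = 1 := by
    rw [← _root_.map_mul, hPQ, _root_.map_one]
  have hQ : ((C : ℝ →+* ℝ[X]).mapMatrix Q) * ((C : ℝ →+* ℝ[X]).mapMatrix P) = 1 := by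
    rw [← _root_.map_mul, hQP, _root_.map_one]
  set P' := (C : ℝ →+* ℝ[X]).mapMatrix P
  set Q' := (C : ℝ →+* ℝ[X]).mapMatrix Q
  set A' := (C : ℝ →+* ℝ[X]).mapMatrix A
  have key : Matrix.scalar (Fin n) (X : ℝ[X]) - P' * A' * Q'
      = P' * (Matrix.scalar (Fin n) (X : ℝ[X]) - A') * Q' := by
    rw [Matrix.mul_sub, Matrix.sub_mul]
    congr 1
    have hc := (scalar_commute (n := Fin n) (X : ℝ[X]) (fun r' => Commute.all _ _) P').eq
    rw [← hc, Matrix.mul_assoc, hP, Matrix.mul_one]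
  rw [h1, key, det_mul, det_mul, mul_comm (P'.det), mul_assoc, ← det_mul, hP, det_one, mul_one]

lemma charpoly_diagonal (d : Fin n → ℝ) :
    (Matrix.diagonal d).charpoly = ∏ i, (X - C (d i)) := by
  unfold Matrix.charpoly charmatrix
  have : (Matrix.scalar (Fin n) (X : ℝ[X]) - (C : ℝ →+* ℝ[X]).mapMatrix (Matrix.diagonal d))
      = Matrix.diagonal (fun i => X - C (d i)) := by
    ext i j
    by_cases h : i = j <;>
      simp [h, Matrix.scalar_apply, Matrix.diagonal_apply, Matrix.sub_apply]
  rw [this, det_diagonal]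

lemma charpoly_of_decomp {M U : Matrix (Fin n) (Fin n) ℝ} (hU : U * Uᵀ = 1) (hU' : Uᵀ * U = 1)
    (x : Fin n → ℝ) (hdecomp : M = U * Matrix.diagonal x * Uᵀ) :
    M.charpoly = ∏ i, (X - C (x i)) := by
  rw [hdecomp, charpoly_conj hU hU', charpoly_diagonal]

lemma eigs_perm_ofFn {M : Matrix (Fin n) (Fin n) ℝ} (hM : M.IsHermitian)
    {U : Matrix (Fin n) (Fin n) ℝ} (hU : U * Uᵀ = 1) (hU' : Uᵀ * U = 1)
    (x : Fin n → ℝ) (hdecomp : M = U * Matrix.diagonal x * Uᵀ) :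
    (List.ofFn hM.eigenvalues).Perm (List.ofFn x) := by
  have hV : M = (hM.eigenvectorUnitary : Matrix (Fin n) (Fin n) ℝ)
      * Matrix.diagonal hM.eigenvalues * (star (hM.eigenvectorUnitary : Matrix (Fin n) (Fin n) ℝ)) := by
    have := hM.spectral_theorem
    simpa [RCLike.ofReal_real_eq_id] using this
  have h1 : M.charpoly = ∏ i, (X - C (hM.eigenvalues i)) := by
    conv_lhs => rw [hV]
    have hw1 : (hM.eigenvectorUnitary : Matrix (Fin n) (Fin n) ℝ)
        * star (hM.eigenvectorUnitary : Matrix (Fin n) (Fin n) ℝ) = 1 :=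
      Matrix.mem_unitaryGroup_iff.mp (hM.eigenvectorUnitary).2
    have hw2 : star (hM.eigenvectorUnitary : Matrix (Fin n) (Fin n) ℝ)
        * (hM.eigenvectorUnitary : Matrix (Fin n) (Fin n) ℝ) = 1 :=
      Matrix.mem_unitaryGroup_iff'.mp (hM.eigenvectorUnitary).2
    rw [charpoly_conj hw1 hw2, charpoly_diagonal]
  have h2 : M.charpoly = ∏ i, (X - C (x i)) := charpoly_of_decomp hU hU' x hdecomp
  have key : (Finset.univ.val.map hM.eigenvalues) = (Finset.univ.val.map x) := by
    have r1 : ((Finset.univ.val.map hM.eigenvalues).map fun a => X - C a).prod.roots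
        = Finset.univ.val.map hM.eigenvalues := roots_multiset_prod_X_sub_C _
    have r2 : ((Finset.univ.val.map x).map fun a => X - C a).prod.roots
        = Finset.univ.val.map x := roots_multiset_prod_X_sub_C _
    have e1 : ((Finset.univ.val.map hM.eigenvalues).map fun a => X - C a).prod
        = ∏ i, (X - C (hM.eigenvalues i)) := by
      rw [Multiset.map_map]; rfl
    have e2 : ((Finset.univ.val.map x).map fun a => X - C a).prod
        = ∏ i, (X - C (x i)) := by
      rw [Multiset.map_map]; rfl
    rw [← r1, ← r2, e1, e2, ← h1, ← h2]
  rw [← Multiset.coe_eq_coe, ← Fin.univ_val_map, ← Fin.univ_val_map]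
  exact key

lemma sortDesc_inv (a : Fin n → ℝ) (i : Fin n) :
    sortDesc a ((Fin.revPerm.trans (Tuple.sort a))⁻¹ i) = a i := by
  show a ((Fin.revPerm.trans (Tuple.sort a)) ((Fin.revPerm.trans (Tuple.sort a))⁻¹ i)) = a i
  rw [Equiv.Perm.inv_def, Equiv.apply_symm_apply]

lemma monovary_sortDesc (a b : Fin n → ℝ) : Monovary (sortDesc a) (sortDesc b) := by
  intro i j hij
  rcases lt_trichotomy i j with h | h | h
  · exact absurd (antitone_sortDesc b h.le) (not_le.mpr hij)
  · simp [h]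
  · exact antitone_sortDesc a h.le

lemma sum_mul_perm_le (a b : Fin n → ℝ) (σ : Equiv.Perm (Fin n)) :
    ∑ i, a i * b (σ i) ≤ ∑ i, sortDesc a i * sortDesc b i := by
  set p := Fin.revPerm.trans (Tuple.sort a)
  set q := Fin.revPerm.trans (Tuple.sort b)
  have ha : ∀ i, a i = sortDesc a (p⁻¹ i) := fun i => (sortDesc_inv a i).symm
  have hb : ∀ i, b i = sortDesc b (q⁻¹ i) := fun i => (sortDesc_inv b i).symm
  calc ∑ i, a i * b (σ i) = ∑ i, sortDesc a (p⁻¹ i) * sortDesc b (q⁻¹ (σ i)) := by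
        refine Finset.sum_congr rfl fun i _ => by rw [← ha, ← hb]
    _ = ∑ k, sortDesc a k * sortDesc b ((p.trans (σ.trans q⁻¹)) k) := by
        rw [← Equiv.sum_comp p (fun i => sortDesc a (p⁻¹ i) * sortDesc b (q⁻¹ (σ i)))]
        refine Finset.sum_congr rfl fun k _ => by simp
    _ ≤ ∑ i, sortDesc a i * sortDesc b i := by
        have := (monovary_sortDesc a b).sum_smul_comp_perm_le_sum_smul
          (σ := p.trans (σ.trans q⁻¹))
        simpa [smul_eq_mul] using this

lemma sum_DS_le (α β : Fin n → ℝ) (D : Matrix (Fin n) (Fin n) ℝ)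
    (hD : D ∈ doublyStochastic ℝ (Fin n)) :
    ∑ i, ∑ j, α i * β j * D i j ≤ ∑ i, sortDesc α i * sortDesc β i := by
  obtain ⟨w, hw0, hw1, hwD⟩ := exists_eq_sum_perm_of_mem_doublyStochastic hD
  have hperm : ∀ σ : Equiv.Perm (Fin n),
      ∑ i, ∑ j, α i * β j * (σ.permMatrix ℝ) i j = ∑ i, α i * β (σ i) := by
    intro σ
    refine Finset.sum_congr rfl fun i _ => ?_
    rw [Finset.sum_eq_single (σ i)]
    · simp [Equiv.Perm.permMatrix, PEquiv.toMatrix, Equiv.toPEquiv]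
    · intro j _ hj
      simp [Equiv.Perm.permMatrix, PEquiv.toMatrix, Equiv.toPEquiv, Ne.symm hj]
    · simp
  calc ∑ i, ∑ j, α i * β j * D i j
      = ∑ σ : Equiv.Perm (Fin n), w σ * ∑ i, α i * β (σ i) := by
        have hent : ∀ i j, α i * β j * D i j
            = ∑ σ : Equiv.Perm (Fin n), w σ * (α i * β j * (σ.permMatrix ℝ) i j) := by
          intro i j
          rw [← hwD]
          simp only [Matrix.sum_apply, Matrix.smul_apply, smul_eq_mul, Finset.mul_sum]
          exact Finset.sum_congr rfl fun σ _ => by ring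
        simp_rw [hent]
        calc ∑ i, ∑ j, ∑ σ : Equiv.Perm (Fin n), w σ * (α i * β j * (σ.permMatrix ℝ) i j)
            = ∑ i, ∑ σ : Equiv.Perm (Fin n), ∑ j, w σ * (α i * β j * (σ.permMatrix ℝ) i j) :=
              Finset.sum_congr rfl fun i _ => Finset.sum_comm
          _ = ∑ σ : Equiv.Perm (Fin n), ∑ i, ∑ j, w σ * (α i * β j * (σ.permMatrix ℝ) i j) :=
              Finset.sum_comm
          _ = ∑ σ : Equiv.Perm (Fin n), w σ * ∑ i, α i * β (σ i) := by
              refine Finset.sum_congr rfl fun σ _ => ?_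
              rw [← hperm σ, Finset.mul_sum]
              exact Finset.sum_congr rfl fun i _ => by rw [Finset.mul_sum]
    _ ≤ ∑ σ : Equiv.Perm (Fin n), w σ * ∑ i, sortDesc α i * sortDesc β i := by
        refine Finset.sum_le_sum fun σ _ => ?_
        exact mul_le_mul_of_nonneg_left (sum_mul_perm_le α β σ) (hw0 σ)
    _ = ∑ i, sortDesc α i * sortDesc β i := by rw [← Finset.sum_mul, hw1, one_mul]

lemma sum_sortDesc_sq (a : Fin n → ℝ) : ∑ i, sortDesc a i ^ 2 = ∑ i, a i ^ 2 := by
  rw [sortDesc_eq_comp]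
  exact Equiv.sum_comp (Fin.revPerm.trans (Tuple.sort a)) (fun i => a i ^ 2)

lemma inner_eq_trace (A B : Matrix (Fin n) (Fin n) ℝ) :
    ∑ i, ∑ j, A i j * B i j = Matrix.trace (A * Bᵀ) := by
  simp [Matrix.trace, Matrix.mul_apply, Matrix.diag]

lemma trace_diag_conj (d e : Fin n → ℝ) (Q : Matrix (Fin n) (Fin n) ℝ) :
    Matrix.trace (Matrix.diagonal d * (Q * Matrix.diagonal e * Qᵀ))
      = ∑ i, ∑ j, d i * e j * Q i j ^ 2 := by
  rw [Matrix.trace]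
  refine Finset.sum_congr rfl fun i _ => ?_
  rw [Matrix.diag_apply, Matrix.diagonal_mul, Matrix.mul_apply, Finset.mul_sum]
  refine Finset.sum_congr rfl fun j _ => ?_
  rw [Matrix.mul_diagonal, Matrix.transpose_apply]
  ring

lemma trace_conj_mul' (V W : Matrix (Fin n) (Fin n) ℝ) (d e : Fin n → ℝ) :
    Matrix.trace ((V * Matrix.diagonal d * Vᵀ) * (W * Matrix.diagonal e * Wᵀ))
      = Matrix.trace (Matrix.diagonal d * ((Vᵀ * W) * Matrix.diagonal e * (Vᵀ * W)ᵀ)) := by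
  rw [Matrix.transpose_mul, Matrix.transpose_transpose]
  rw [Matrix.trace_mul_comm]
  have : (W * Matrix.diagonal e * Wᵀ) * (V * Matrix.diagonal d * Vᵀ)
      = W * (Matrix.diagonal e * (Wᵀ * V) * Matrix.diagonal d * Vᵀ) := by
    noncomm_ring
  rw [this, Matrix.trace_mul_comm]
  have : Matrix.diagonal e * (Wᵀ * V) * Matrix.diagonal d * Vᵀ * W
      = Matrix.diagonal e * (Wᵀ * V) * (Matrix.diagonal d * (Vᵀ * W)) := by
    noncomm_ring
  rw [this, Matrix.trace_mul_comm]
  noncomm_ring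

lemma trace_conj_mul (V W : Matrix (Fin n) (Fin n) ℝ) (d e : Fin n → ℝ) :
    Matrix.trace ((V * Matrix.diagonal d * Vᵀ) * (W * Matrix.diagonal e * Wᵀ))
      = ∑ i, ∑ j, d i * e j * ((Vᵀ * W) i j) ^ 2 := by
  rw [trace_conj_mul', trace_diag_conj]

lemma sq_DS {Q : Matrix (Fin n) (Fin n) ℝ} (hQ : Q * Qᵀ = 1) (hQ' : Qᵀ * Q = 1) :
    Matrix.of (fun i j => Q i j ^ 2) ∈ doublyStochastic ℝ (Fin n) := by
  rw [mem_doublyStochastic_iff_sum]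
  refine ⟨fun i j => sq_nonneg _, fun i => ?_, fun j => ?_⟩
  · have := congrArg (fun M => M i i) hQ
    simp only [Matrix.mul_apply, Matrix.transpose_apply, Matrix.one_apply_eq] at this
    simpa [sq] using this
  · have := congrArg (fun M => M j j) hQ'
    simp only [Matrix.mul_apply, Matrix.transpose_apply, Matrix.one_apply_eq] at this
    simpa [sq] using this

lemma sum_one_sq (d e : Fin n → ℝ) :
    ∑ i, ∑ j, d i * e j * ((1 : Matrix (Fin n) (Fin n) ℝ) i j) ^ 2 = ∑ i, d i * e i := by
  refine Finset.sum_congr rfl fun i _ => ?_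
  rw [Finset.sum_eq_single i (by intro b _ hb; simp [Matrix.one_apply, Ne.symm hb]) (by simp)]
  simp [Matrix.one_apply_eq]

lemma sum_expand (x y : Fin n → ℝ) :
    ∑ i, (x i - y i) ^ 2 = ∑ i, x i * x i + ∑ i, y i * y i - 2 * ∑ i, x i * y i := by
  rw [Finset.mul_sum, ← Finset.sum_add_distrib, ← Finset.sum_sub_distrib]
  exact Finset.sum_congr rfl fun i _ => by ring

lemma hoffman_wielandt {V W : Matrix (Fin n) (Fin n) ℝ}
    (hV : V * Vᵀ = 1) (hV' : Vᵀ * V = 1) (hW : W * Wᵀ = 1) (hW' : Wᵀ * W = 1)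
    (d e : Fin n → ℝ) :
    ∑ i, (sortDesc d i - sortDesc e i) ^ 2 ≤
      ∑ i, ∑ j, ((V * Matrix.diagonal d * Vᵀ) i j - (W * Matrix.diagonal e * Wᵀ) i j) ^ 2 := by
  set A := V * Matrix.diagonal d * Vᵀ with hA
  set B := W * Matrix.diagonal e * Wᵀ with hB
  have hAt : Aᵀ = A := by
    rw [hA, Matrix.transpose_mul, Matrix.transpose_mul, Matrix.transpose_transpose,
      Matrix.diagonal_transpose, Matrix.mul_assoc]
  have hBt : Bᵀ = B := by
    rw [hB, Matrix.transpose_mul, Matrix.transpose_mul, Matrix.transpose_transpose,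
      Matrix.diagonal_transpose, Matrix.mul_assoc]
  have hAA : ∑ i, ∑ j, A i j * A i j = ∑ i, d i * d i := by
    rw [inner_eq_trace, hAt, hA, trace_conj_mul, hV', sum_one_sq]
  have hBB : ∑ i, ∑ j, B i j * B i j = ∑ i, e i * e i := by
    rw [inner_eq_trace, hBt, hB, trace_conj_mul, hW', sum_one_sq]
  have hQ : (Vᵀ * W) * (Vᵀ * W)ᵀ = 1 := by
    rw [Matrix.transpose_mul, Matrix.transpose_transpose, Matrix.mul_assoc,
      ← Matrix.mul_assoc W, hW, Matrix.one_mul, hV']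
  have hQ' : (Vᵀ * W)ᵀ * (Vᵀ * W) = 1 := by
    rw [Matrix.transpose_mul, Matrix.transpose_transpose, Matrix.mul_assoc,
      ← Matrix.mul_assoc V, hV, Matrix.one_mul, hW']
  have hAB : ∑ i, ∑ j, A i j * B i j ≤ ∑ i, sortDesc d i * sortDesc e i := by
    rw [inner_eq_trace, hBt, hA, hB, trace_conj_mul]
    have := sum_DS_le d e (Matrix.of fun i j => (Vᵀ * W) i j ^ 2) (sq_DS hQ hQ')
    simpa using this
  have lhs : ∑ i, (sortDesc d i - sortDesc e i) ^ 2
      = ∑ i, d i * d i + ∑ i, e i * e i - 2 * ∑ i, sortDesc d i * sortDesc e i := by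
    rw [sum_expand]
    have h1 : ∑ i, sortDesc d i * sortDesc d i = ∑ i, d i * d i := by
      simpa [sq] using sum_sortDesc_sq d
    have h2 : ∑ i, sortDesc e i * sortDesc e i = ∑ i, e i * e i := by
      simpa [sq] using sum_sortDesc_sq e
    rw [h1, h2]
  have rhs : ∑ i, ∑ j, (A i j - B i j) ^ 2
      = ∑ i, d i * d i + ∑ i, e i * e i - 2 * ∑ i, ∑ j, A i j * B i j := by
    have h1 : ∀ i ∈ Finset.univ, ∑ j, (A i j - B i j) ^ 2
        = ∑ j, A i j * A i j + ∑ j, B i j * B i j - 2 * ∑ j, A i j * B i j :=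
      fun i _ => sum_expand _ _
    rw [Finset.sum_congr rfl h1, Finset.sum_sub_distrib, Finset.sum_add_distrib,
      hAA, hBB, ← Finset.mul_sum]
  rw [lhs, rhs]
  linarith

lemma isHermitian_conj_diag (U : Matrix (Fin n) (Fin n) ℝ) (x : Fin n → ℝ) :
    (U * Matrix.diagonal x * Uᵀ).IsHermitian := by
  unfold Matrix.IsHermitian
  rw [Matrix.conjTranspose_eq_transpose_of_trivial, Matrix.transpose_mul, Matrix.transpose_mul,
    Matrix.transpose_transpose, Matrix.diagonal_transpose, Matrix.mul_assoc]

lemma eigsDesc_conj' {M U : Matrix (Fin n) (Fin n) ℝ} (hM : M.IsHermitian)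
    (hU : U * Uᵀ = 1) (hU' : Uᵀ * U = 1) (x : Fin n → ℝ)
    (hdecomp : M = U * Matrix.diagonal x * Uᵀ) :
    sortDesc hM.eigenvalues = sortDesc x :=
  sortDesc_eq_of_perm (eigs_perm_ofFn hM hU hU' x hdecomp)

lemma frob_conj {U : Matrix (Fin n) (Fin n) ℝ} (hU : U * Uᵀ = 1) (hU' : Uᵀ * U = 1)
    (a b : Fin n → ℝ) :
    ∑ i, ∑ j, ((U * Matrix.diagonal a * Uᵀ) i j - (U * Matrix.diagonal b * Uᵀ) i j) ^ 2
      = ∑ i, (a i - b i) ^ 2 := by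
  set A := U * Matrix.diagonal a * Uᵀ with hA
  set B := U * Matrix.diagonal b * Uᵀ with hB
  have hAt : Aᵀ = A := by
    rw [hA, Matrix.transpose_mul, Matrix.transpose_mul, Matrix.transpose_transpose,
      Matrix.diagonal_transpose, Matrix.mul_assoc]
  have hBt : Bᵀ = B := by
    rw [hB, Matrix.transpose_mul, Matrix.transpose_mul, Matrix.transpose_transpose,
      Matrix.diagonal_transpose, Matrix.mul_assoc]
  have hAA : ∑ i, ∑ j, A i j * A i j = ∑ i, a i * a i := by
    rw [inner_eq_trace, hAt, hA, trace_conj_mul, hU', sum_one_sq]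
  have hBB : ∑ i, ∑ j, B i j * B i j = ∑ i, b i * b i := by
    rw [inner_eq_trace, hBt, hB, trace_conj_mul, hU', sum_one_sq]
  have hAB : ∑ i, ∑ j, A i j * B i j = ∑ i, a i * b i := by
    rw [inner_eq_trace, hBt, hA, hB, trace_conj_mul, hU', sum_one_sq]
  have rhs : ∑ i, ∑ j, (A i j - B i j) ^ 2
      = ∑ i, a i * a i + ∑ i, b i * b i - 2 * ∑ i, ∑ j, A i j * B i j := by
    have h1 : ∀ i ∈ Finset.univ, ∑ j, (A i j - B i j) ^ 2
        = ∑ j, A i j * A i j + ∑ j, B i j * B i j - 2 * ∑ j, A i j * B i j :=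
      fun i _ => sum_expand _ _
    rw [Finset.sum_congr rfl h1, Finset.sum_sub_distrib, Finset.sum_add_distrib,
      hAA, hBB, ← Finset.mul_sum]
  rw [rhs, hAB, sum_expand]

lemma eigsDesc_of_isHermitian {n : ℕ} {X : Matrix (Fin n) (Fin n) ℝ} (h : X.IsHermitian) :
    eigsDesc X = sortDesc h.eigenvalues := by
  unfold eigsDesc
  rw [dif_pos h]

lemma continuous_conj_diag (U : Matrix (Fin n) (Fin n) ℝ) :
    Continuous (fun x : Fin n → ℝ => U * Matrix.diagonal x * Uᵀ) := by
  apply continuous_matrix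
  intro i j
  have hentry : ∀ x : Fin n → ℝ, (U * Matrix.diagonal x * Uᵀ) i j
      = ∑ k, U i k * x k * U j k := by
    intro x
    rw [Matrix.mul_apply]
    refine Finset.sum_congr rfl fun k _ => ?_
    rw [Matrix.mul_diagonal, Matrix.transpose_apply]
  simp only [hentry]
  exact continuous_finset_sum _ fun k _ =>
    ((continuous_const.mul (continuous_apply k)).mul continuous_const)


/-- If `f` is a proper convex symmetric function (value `f` on its
domain `S`, `+∞` outside), `Xb = U diag(λ̄) Uᵀ` is an eigenvalue decomposition of the
symmetric matrix `Xb`, and `(t*, v*, λ*)` is the Euclidean projection of `(tb, vb, λ̄)`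
onto the spectral vector cone `K_f`, then the Euclidean projection of `(tb, vb, Xb)`
onto the spectral matrix cone `K_F` is `(t*, v*, U diag(λ*) Uᵀ)`. -/
theorem stmt0 {n : ℕ} (S : Set (Fin n → ℝ)) (f : (Fin n → ℝ) → ℝ)
    (hproper : S.Nonempty) (hconv : ConvexOn ℝ S f)
    (hsymm : ∀ (e : Equiv.Perm (Fin n)) (x : Fin n → ℝ), x ∈ S →
      (x ∘ ⇑e) ∈ S ∧ f (x ∘ ⇑e) = f x)
    (tb vb : ℝ) (Xb : Matrix (Fin n) (Fin n) ℝ)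
    (U : Matrix (Fin n) (Fin n) ℝ) (hU : U * Uᵀ = 1) (hU' : Uᵀ * U = 1)
    (lam : Fin n → ℝ) (hdecomp : Xb = U * Matrix.diagonal lam * Uᵀ)
    (tstar vstar : ℝ) (lamstar : Fin n → ℝ)
    (hmem : (tstar, vstar, lamstar) ∈ vecCone S f)
    (hnearest : ∀ q ∈ vecCone S f,
      (tstar - tb) ^ 2 + (vstar - vb) ^ 2 + ∑ i, (lamstar i - lam i) ^ 2 ≤
      (q.1 - tb) ^ 2 + (q.2.1 - vb) ^ 2 + ∑ i, (q.2.2 i - lam i) ^ 2) :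
    (tstar, vstar, U * Matrix.diagonal lamstar * Uᵀ) ∈ matCone S f ∧
    ∀ q ∈ matCone S f,
      (tstar - tb) ^ 2 + (vstar - vb) ^ 2 +
        ∑ i, ∑ j, ((U * Matrix.diagonal lamstar * Uᵀ) i j - Xb i j) ^ 2 ≤
      (q.1 - tb) ^ 2 + (q.2.1 - vb) ^ 2 + ∑ i, ∑ j, (q.2.2 i j - Xb i j) ^ 2 := by
  set Sv : Set (ℝ × ℝ × (Fin n → ℝ)) :=
    {p | 0 < p.2.1 ∧ p.2.1⁻¹ • p.2.2 ∈ S ∧ p.2.1 * f (p.2.1⁻¹ • p.2.2) ≤ p.1} with hSv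
  set Sm : Set (ℝ × ℝ × Matrix (Fin n) (Fin n) ℝ) :=
    {p | p.2.2.IsHermitian ∧ 0 < p.2.1 ∧ p.2.1⁻¹ • eigsDesc p.2.2 ∈ S ∧
      p.2.1 * f (p.2.1⁻¹ • eigsDesc p.2.2) ≤ p.1} with hSm
  constructor
  · -- membership
    set φ : ℝ × ℝ × (Fin n → ℝ) → ℝ × ℝ × Matrix (Fin n) (Fin n) ℝ :=
      fun p => (p.1, p.2.1, U * Matrix.diagonal p.2.2 * Uᵀ) with hφ
    have hφc : Continuous φ :=
      continuous_fst.prodMk ((continuous_fst.comp continuous_snd).prodMk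
        ((continuous_conj_diag U).comp (continuous_snd.comp continuous_snd)))
    have himg : φ '' Sv ⊆ Sm := by
      rintro _ ⟨⟨t, v, x⟩, ⟨hv, hxS, hxf⟩, rfl⟩
      have hherm : (U * Matrix.diagonal x * Uᵀ).IsHermitian := isHermitian_conj_diag U x
      have heig : eigsDesc (U * Matrix.diagonal x * Uᵀ) = sortDesc x := by
        rw [eigsDesc_of_isHermitian hherm]
        exact eigsDesc_conj' hherm hU hU' x rfl
      have hcomp : sortDesc x = x ∘ (Fin.revPerm.trans (Tuple.sort x)) := sortDesc_eq_comp x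
      have hsm : v⁻¹ • sortDesc x = (v⁻¹ • x) ∘ (Fin.revPerm.trans (Tuple.sort x)) := by
        rw [hcomp]; rfl
      obtain ⟨hS1, hf1⟩ := hsymm (Fin.revPerm.trans (Tuple.sort x)) (v⁻¹ • x) hxS
      refine ⟨hherm, hv, ?_, ?_⟩
      · show v⁻¹ • eigsDesc (U * Matrix.diagonal x * Uᵀ) ∈ S
        rw [heig, hsm]; exact hS1
      · show v * f (v⁻¹ • eigsDesc (U * Matrix.diagonal x * Uᵀ)) ≤ t
        rw [heig, hsm, hf1]; exact hxf
    have : φ (tstar, vstar, lamstar) ∈ closure Sm := by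
      have h1 : φ (tstar, vstar, lamstar) ∈ φ '' (closure Sv) := Set.mem_image_of_mem φ hmem
      have h2 : φ '' (closure Sv) ⊆ closure (φ '' Sv) := image_closure_subset_closure_image hφc
      exact closure_mono himg (h2 h1)
    exact this
  · -- nearest
    intro q hq
    set c : ℝ := (tstar - tb) ^ 2 + (vstar - vb) ^ 2 + ∑ i, (lamstar i - lam i) ^ 2 with hc
    have hconst : (tstar - tb) ^ 2 + (vstar - vb) ^ 2 +
        ∑ i, ∑ j, ((U * Matrix.diagonal lamstar * Uᵀ) i j - Xb i j) ^ 2 = c := by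
      rw [hc, hdecomp, frob_conj hU hU']
    rw [hconst]
    set g : ℝ × ℝ × Matrix (Fin n) (Fin n) ℝ → ℝ :=
      fun q => (q.1 - tb) ^ 2 + (q.2.1 - vb) ^ 2 + ∑ i, ∑ j, (q.2.2 i j - Xb i j) ^ 2 with hg
    have hgc : Continuous g := by
      apply Continuous.add
      apply Continuous.add
      · exact (continuous_fst.sub continuous_const).pow 2
      · exact ((continuous_fst.comp continuous_snd).sub continuous_const).pow 2
      · refine continuous_finset_sum _ fun i _ => continuous_finset_sum _ fun j _ => ?_
        have : Continuous fun q : ℝ × ℝ × Matrix (Fin n) (Fin n) ℝ => q.2.2 i j :=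
          (continuous_apply j).comp ((continuous_apply i).comp
            (continuous_snd.comp continuous_snd))
        exact (this.sub continuous_const).pow 2
    have hSmle : Sm ⊆ {q | c ≤ g q} := by
      rintro ⟨t, v, Y⟩ ⟨hY, hv, hYS, hYf⟩
      have hW1 : (hY.eigenvectorUnitary : Matrix (Fin n) (Fin n) ℝ)
          * star (hY.eigenvectorUnitary : Matrix (Fin n) (Fin n) ℝ) = 1 :=
        Matrix.mem_unitaryGroup_iff.mp (hY.eigenvectorUnitary).2
      have hW2 : star (hY.eigenvectorUnitary : Matrix (Fin n) (Fin n) ℝ)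
          * (hY.eigenvectorUnitary : Matrix (Fin n) (Fin n) ℝ) = 1 :=
        Matrix.mem_unitaryGroup_iff'.mp (hY.eigenvectorUnitary).2
      have hstar : star (hY.eigenvectorUnitary : Matrix (Fin n) (Fin n) ℝ)
          = (hY.eigenvectorUnitary : Matrix (Fin n) (Fin n) ℝ)ᵀ := by
        rw [Matrix.star_eq_conjTranspose, Matrix.conjTranspose_eq_transpose_of_trivial]
      rw [hstar] at hW1 hW2
      have hYdec : Y = (hY.eigenvectorUnitary : Matrix (Fin n) (Fin n) ℝ)
          * Matrix.diagonal hY.eigenvalues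
          * (hY.eigenvectorUnitary : Matrix (Fin n) (Fin n) ℝ)ᵀ := by
        have := hY.spectral_theorem
        rw [Unitary.conjStarAlgAut_apply, hstar] at this
        simpa [RCLike.ofReal_real_eq_id] using this
      set p : Equiv.Perm (Fin n) := Fin.revPerm.trans (Tuple.sort lam) with hp
      set z : Fin n → ℝ := (sortDesc hY.eigenvalues) ∘ ⇑(p⁻¹) with hz
      have hlam : ∀ i, lam i = sortDesc lam (p⁻¹ i) := fun i => (sortDesc_inv lam i).symm
      have heq : eigsDesc Y = sortDesc hY.eigenvalues := eigsDesc_of_isHermitian hY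
      -- the vector point
      have hq' : (t, v, z) ∈ vecCone S f := by
        apply subset_closure
        have hzs : v⁻¹ • z = (v⁻¹ • sortDesc hY.eigenvalues) ∘ ⇑(p⁻¹) := by
          funext i; rfl
        obtain ⟨hS1, hf1⟩ := hsymm p⁻¹ (v⁻¹ • sortDesc hY.eigenvalues)
          (by rw [← heq]; exact hYS)
        refine ⟨hv, ?_, ?_⟩
        · show v⁻¹ • z ∈ S
          rw [hzs]; exact hS1
        · show v * f (v⁻¹ • z) ≤ t
          rw [hzs, hf1, ← heq]; exact hYf
      have hn := hnearest (t, v, z) hq'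
      have hsum : ∑ i, (z i - lam i) ^ 2 = ∑ i, (sortDesc hY.eigenvalues i - sortDesc lam i) ^ 2 := by
        calc ∑ i, (z i - lam i) ^ 2
            = ∑ i, (sortDesc hY.eigenvalues (p⁻¹ i) - sortDesc lam (p⁻¹ i)) ^ 2 :=
              Finset.sum_congr rfl fun i _ => by rw [hz]; simp only [Function.comp_apply, ← hlam i]
          _ = ∑ i, (sortDesc hY.eigenvalues i - sortDesc lam i) ^ 2 :=
              Equiv.sum_comp p⁻¹
                (fun i => (sortDesc hY.eigenvalues i - sortDesc lam i) ^ 2)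
      have hhw : ∑ i, (sortDesc hY.eigenvalues i - sortDesc lam i) ^ 2
          ≤ ∑ i, ∑ j, (Y i j - Xb i j) ^ 2 := by
        calc ∑ i, (sortDesc hY.eigenvalues i - sortDesc lam i) ^ 2
            ≤ ∑ i, ∑ j, (((hY.eigenvectorUnitary : Matrix (Fin n) (Fin n) ℝ)
                * Matrix.diagonal hY.eigenvalues
                * (hY.eigenvectorUnitary : Matrix (Fin n) (Fin n) ℝ)ᵀ) i j
                - (U * Matrix.diagonal lam * Uᵀ) i j) ^ 2 :=
              hoffman_wielandt hW1 hW2 hU hU' hY.eigenvalues lam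
          _ = ∑ i, ∑ j, (Y i j - Xb i j) ^ 2 := by rw [← hYdec, ← hdecomp]
      show c ≤ g (t, v, Y)
      rw [hg]
      dsimp only
      rw [hsum] at hn
      calc c ≤ (t - tb) ^ 2 + (v - vb) ^ 2
            + ∑ i, (sortDesc hY.eigenvalues i - sortDesc lam i) ^ 2 := hn
        _ ≤ (t - tb) ^ 2 + (v - vb) ^ 2 + ∑ i, ∑ j, (Y i j - Xb i j) ^ 2 := by linarith
    have hclosed : IsClosed {q : ℝ × ℝ × Matrix (Fin n) (Fin n) ℝ | c ≤ g q} :=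
      isClosed_le continuous_const hgc
    have : matCone S f ⊆ {q | c ≤ g q} := by
      rw [matCone, ← hSm]
      exact closure_minimal hSmle hclosed
    exact this hq
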